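/- Let (G, 𝒫, 𝒯) be an instance of Partitioned Vertex Cover with solution U, let H be the Popular Matching instance constructed from (G, 𝒫, 𝒯), and let M* be the matching in H constructed from U. If S is an alternating path in H_{M*} containing at least two edges labeled +2 by label_{M*} and of minimum length (number of edges) among all such alternating paths, then S does not contain the vertex u^e_i for any edge e of G and endpoint i of e. -/

import Mathlib

open SimpleGraph

universe u

/-- A matching: a set of edges of `G` that are pairwise vertex-disjoint. -/
def IsMatching {W : Type u} (G : SimpleGraph W) (M : Set (Sym2 W)) : Prop :=
  M ⊆ G.edgeSet ∧ ∀ e ∈ M, ∀ e' ∈ M, e ≠ e' → ∀ v : W, v ∈ e → v ∉ e'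

/-- `v` is matched by `M`. -/
def Matched {W : Type u} (M : Set (Sym2 W)) (v : W) : Prop := ∃ w : W, s(v, w) ∈ M

open scoped Classical in
/-- `rank G pref M v = pref v (M(v))`, with the convention `|N(v)|+1` if `v` is unmatched. -/
noncomputable def rank {W : Type u} (G : SimpleGraph W) (pref : W → W → ℕ)
    (M : Set (Sym2 W)) (v : W) : ℕ :=
  if h : ∃ w : W, s(v, w) ∈ M then pref v h.choose else (G.neighborSet v).ncard + 1

/-- The number of vertices preferring `M` over `M'`. -/
noncomputable def vote {W : Type u} (G : SimpleGraph W) (pref : W → W → ℕ)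
    (M M' : Set (Sym2 W)) : ℕ :=
  {v : W | rank G pref M v < rank G pref M' v}.ncard

/-- A popular matching: no other matching is more popular. -/
def IsPopular {W : Type u} (G : SimpleGraph W) (pref : W → W → ℕ) (M : Set (Sym2 W)) : Prop :=
  IsMatching G M ∧
    ∀ M' : Set (Sym2 W), IsMatching G M' → vote G pref M' M ≤ vote G pref M M'

/-- Each vertex has a strict preference list: `pref v` is a bijection from the
neighborhood of `v` onto `{1, …, |N(v)|}`. -/
def HasPref {W : Type u} (G : SimpleGraph W) (pref : W → W → ℕ) : Prop :=
  ∀ v : W, Set.BijOn (pref v) (G.neighborSet v) (Set.Icc 1 (G.neighborSet v).ncard)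

/-- The edge `e ∉ M` is labeled `+2` by `label_M` (given rank function `rk`):
both endpoints prefer each other over their status in `M`. -/
def EdgePlus {W : Type u} (pref : W → W → ℕ) (rk : W → ℕ) (e : Sym2 W) : Prop :=
  ∃ x y : W, e = s(x, y) ∧ pref x y < rk x ∧ pref y x < rk y

/-- The edge `e ∉ M` is labeled `-2` by `label_M` (given rank function `rk`):
both endpoints prefer their status in `M` over each other. -/
def EdgeMinus {W : Type u} (pref : W → W → ℕ) (rk : W → ℕ) (e : Sym2 W) : Prop :=
  ∃ x y : W, e = s(x, y) ∧ rk x < pref x y ∧ rk y < pref y x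

/-- The graph `G_M`: the spanning subgraph of `G` consisting of the edges of `M`
together with the edges not labeled `-2`. -/
def GMgraph {W : Type u} (G : SimpleGraph W) (pref : W → W → ℕ) (M : Set (Sym2 W)) :
    SimpleGraph W where
  Adj x y := G.Adj x y ∧ (s(x, y) ∈ M ∨ ¬ EdgeMinus pref (rank G pref M) s(x, y))
  symm := by
    constructor
    intro x y h
    refine ⟨h.1.symm, ?_⟩
    rw [Sym2.eq_swap]
    exact h.2
  loopless := ⟨fun x h => G.loopless.1 x h.1⟩

/-- Consecutive edges alternate between `M` and non-`M`. -/
def altRel {W : Type u} (M : Set (Sym2 W)) (e e' : Sym2 W) : Prop := e ∈ M ↔ e' ∉ M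

/-- An alternating path (with respect to `M`) in a graph `G'`. -/
def IsAltPath {W : Type u} (M : Set (Sym2 W)) {G' : SimpleGraph W} {x y : W}
    (p : G'.Walk x y) : Prop :=
  p.IsPath ∧ List.Chain' (altRel M) p.edges ∧
    (∀ e, p.edges.head? = some e → e ∉ M → ¬ Matched M x) ∧
    (∀ e, p.edges.getLast? = some e → e ∉ M → ¬ Matched M y)

/-- An alternating cycle (with respect to `M`) in a graph `G'`:
the edges alternate cyclically between `M` and non-`M`. -/
def IsAltCycle {W : Type u} (M : Set (Sym2 W)) {G' : SimpleGraph W} {x : W}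
    (p : G'.Walk x x) : Prop :=
  p.IsCycle ∧ List.Chain' (altRel M) (p.edges ++ p.edges.take 1)

/-- `l` contains at least one edge labeled `+2`. -/
def OnePlusEdge {W : Type u} (pref : W → W → ℕ) (rk : W → ℕ) (l : List (Sym2 W)) : Prop :=
  ∃ e ∈ l, EdgePlus pref rk e

/-- `l` contains at least two edges labeled `+2`. -/
def TwoPlusEdges {W : Type u} (pref : W → W → ℕ) (rk : W → ℕ) (l : List (Sym2 W)) : Prop :=
  ∃ e ∈ l, ∃ e' ∈ l, e ≠ e' ∧ EdgePlus pref rk e ∧ EdgePlus pref rk e'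

/-- A vertex cover. -/
def IsVC {V : Type u} (G : SimpleGraph V) (U : Set V) : Prop :=
  ∀ ⦃x y : V⦄, G.Adj x y → x ∈ U ∨ y ∈ U
/-- An instance of Partitioned Vertex Cover: `G` is a finite simple graph, `P` is a
collection of pairwise disjoint edges of `G`, `T` is a collection of pairwise disjoint
3-element vertex sets each inducing a triangle in `G`, and every vertex of `G` lies in
exactly one member of `P ∪ T`. -/
def IsPVC {V : Type u} (G : SimpleGraph V) (P : Set (Sym2 V)) (T : Set (Finset V)) : Prop :=
  Finite V ∧
  P ⊆ G.edgeSet ∧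
  (∀ e ∈ P, ∀ e' ∈ P, e ≠ e' → ∀ v : V, v ∈ e → v ∉ e') ∧
  (∀ t ∈ T, t.card = 3) ∧
  (∀ t ∈ T, ∀ x ∈ t, ∀ y ∈ t, x ≠ y → G.Adj x y) ∧
  (∀ t ∈ T, ∀ t' ∈ T, t ≠ t' → ∀ v : V, v ∈ t → v ∉ t') ∧
  (∀ v : V, (∃ e ∈ P, v ∈ e) ∨ (∃ t ∈ T, v ∈ t)) ∧
  (∀ v : V, ¬ ((∃ e ∈ P, v ∈ e) ∧ (∃ t ∈ T, v ∈ t)))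

/-- A solution of a Partitioned Vertex Cover instance: a vertex cover `U` with
`|U ∩ P| = 1` for every pair `P` and `|U ∩ T| = 2` for every triple `T`. -/
def IsPVCSolution {V : Type u} (G : SimpleGraph V) (P : Set (Sym2 V)) (T : Set (Finset V))
    (U : Set V) : Prop :=
  IsVC G U ∧
  (∀ e ∈ P, {x : V | x ∈ e ∧ x ∈ U}.ncard = 1) ∧
  (∀ t ∈ T, {x : V | x ∈ t ∧ x ∈ U}.ncard = 2)

/-- The vertices of the graph `H` built from a Partitioned Vertex Cover instance:
`a i`, `b i`, `c i`, `d i` for a vertex `i` of `G`; `u i j` is the vertex `u^e_i` for the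
edge `e = {i,j}` of `G`; `f i j` is the vertex `f_{ij}` for the pair `{i,j} ∈ P`. -/
inductive Gad (V : Type u) : Type u where
  | a : V → Gad V
  | b : V → Gad V
  | c : V → Gad V
  | d : V → Gad V
  | u : V → V → Gad V
  | f : V → V → Gad V
deriving DecidableEq

/-- Which formal gadget vertices are really vertices of `H`. -/
def Gad.valid {V : Type u} (G : SimpleGraph V) (P : Set (Sym2 V)) : Gad V → Prop
  | .u i j => G.Adj i j
  | .f i j => s(i, j) ∈ P
  | _ => True

/-- The edges of `H`, up to symmetry. -/
inductive HBase {V : Type u} (G : SimpleGraph V) (P : Set (Sym2 V)) (T : Set (Finset V)) :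
    Gad V → Gad V → Prop where
  | da (i : V) : HBase G P T (.d i) (.a i)
  | ab (i : V) : HBase G P T (.a i) (.b i)
  | ac (i : V) : HBase G P T (.a i) (.c i)
  | bc (i : V) : HBase G P T (.b i) (.c i)
  | uu {i j : V} (h : G.Adj i j) : HBase G P T (.u i j) (.u j i)
  | bu {i j : V} (h : G.Adj i j) : HBase G P T (.b i) (.u i j)
  | df {i j : V} (h : s(i, j) ∈ P) : HBase G P T (.d i) (.f i j)
  | fc {i j : V} (h : s(i, j) ∈ P) : HBase G P T (.f i j) (.c j)
  | cd {i j : V} (h : s(i, j) ∈ P) : HBase G P T (.c i) (.d j)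
  | dd {i j : V} {t : Finset V} (ht : t ∈ T) (hi : i ∈ t) (hj : j ∈ t) (hne : i ≠ j) :
      HBase G P T (.d i) (.d j)
  | cc {i j : V} {t : Finset V} (ht : t ∈ T) (hi : i ∈ t) (hj : j ∈ t) (hne : i ≠ j) :
      HBase G P T (.c i) (.c j)

/-- The graph `H` of the Popular Matching instance built from `(G, P, T)`. -/
def Hgraph {V : Type u} (G : SimpleGraph V) (P : Set (Sym2 V)) (T : Set (Finset V)) :
    SimpleGraph {g : Gad V // Gad.valid G P g} where
  Adj x y := x ≠ y ∧ (HBase G P T x.1 y.1 ∨ HBase G P T y.1 x.1)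
  symm := ⟨fun _ _ h => ⟨h.1.symm, h.2.symm⟩⟩
  loopless := ⟨fun _ h => h.1 rfl⟩

/-- The Popular Matching instance (graph together with preference lists) constructed
from a Partitioned Vertex Cover instance `(G, P, T)`.  The field `pref` gives the
preference lists; all its values on the neighborhoods in `H` are pinned down, except
the ranks that `b i` assigns to the vertices `u^e_i`, which form an arbitrary fixed
bijection onto `{2, …, deg_G(i) + 1}`. -/
structure Reduction (V : Type u) [LinearOrder V] : Type u where
  G : SimpleGraph V
  P : Set (Sym2 V)
  T : Set (Finset V)
  ispvc : IsPVC G P T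
  pref : Gad V → Gad V → ℕ
  pref_ab : ∀ i : V, pref (.a i) (.b i) = 1
  pref_ac : ∀ i : V, pref (.a i) (.c i) = 2
  pref_ad : ∀ i : V, pref (.a i) (.d i) = 3
  pref_ba : ∀ i : V, pref (.b i) (.a i) = 1
  pref_bu : ∀ i : V, Set.BijOn (pref (.b i)) {g : Gad V | ∃ j : V, G.Adj i j ∧ g = .u i j}
      (Set.Icc 2 ((G.neighborSet i).ncard + 1))
  pref_bc : ∀ i : V, pref (.b i) (.c i) = (G.neighborSet i).ncard + 2
  pref_ca : ∀ i : V, pref (.c i) (.a i) = 1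
  pref_cb : ∀ i : V, pref (.c i) (.b i) = 2
  pref_da : ∀ i : V, pref (.d i) (.a i) = 1
  pref_uu : ∀ i j : V, G.Adj i j → pref (.u i j) (.u j i) = 1
  pref_ub : ∀ i j : V, G.Adj i j → pref (.u i j) (.b i) = 2
  pref_cf : ∀ i j : V, s(i, j) ∈ P → pref (.c i) (.f j i) = 3
  pref_cd : ∀ i j : V, s(i, j) ∈ P → pref (.c i) (.d j) = 4
  pref_dc : ∀ i j : V, s(i, j) ∈ P → pref (.d i) (.c j) = 2
  pref_df : ∀ i j : V, s(i, j) ∈ P → pref (.d i) (.f i j) = 3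
  pref_fd : ∀ i j : V, s(i, j) ∈ P → pref (.f i j) (.d i) = 1
  pref_fc : ∀ i j : V, s(i, j) ∈ P → pref (.f i j) (.c j) = 2
  pref_tri : ∀ t ∈ T, ∀ i j k : V, t = {i, j, k} → i < j → j < k →
    pref (.c i) (.c k) = 3 ∧ pref (.c i) (.c j) = 4 ∧
    pref (.c j) (.c i) = 3 ∧ pref (.c j) (.c k) = 4 ∧
    pref (.c k) (.c j) = 3 ∧ pref (.c k) (.c i) = 4 ∧
    pref (.d i) (.d j) = 2 ∧ pref (.d i) (.d k) = 3 ∧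
    pref (.d j) (.d k) = 2 ∧ pref (.d j) (.d i) = 3 ∧
    pref (.d k) (.d i) = 2 ∧ pref (.d k) (.d j) = 3

namespace Reduction

variable {V : Type u} [LinearOrder V] (R : Reduction V)

/-- The vertex set of `H`. -/
abbrev HV : Type u := {g : Gad V // Gad.valid R.G R.P g}

/-- The graph `H`. -/
def H : SimpleGraph R.HV := Hgraph R.G R.P R.T

/-- The preference lists of `H`, as a function on its vertices. -/
def prefH : R.HV → R.HV → ℕ := fun x y => R.pref x.1 y.1

/-- The vertex `a_i` of `H`. -/
def va (i : V) : R.HV := ⟨.a i, trivial⟩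
/-- The vertex `b_i` of `H`. -/
def vb (i : V) : R.HV := ⟨.b i, trivial⟩
/-- The vertex `c_i` of `H`. -/
def vc (i : V) : R.HV := ⟨.c i, trivial⟩
/-- The vertex `d_i` of `H`. -/
def vd (i : V) : R.HV := ⟨.d i, trivial⟩
/-- The vertex `u^e_i` of `H`, for an edge `e = {i,j}` of `G`. -/
def vu (i j : V) (h : R.G.Adj i j) : R.HV := ⟨.u i j, h⟩
/-- The vertex `f_{ij}` of `H`, for a pair `{i,j} ∈ P`. -/
def vf (i j : V) (h : s(i, j) ∈ R.P) : R.HV := ⟨.f i j, h⟩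

/-- The matching `M*` in `H` constructed from a solution `U`. -/
def Mstar (U : Set V) : Set (Sym2 R.HV) :=
  {e : Sym2 R.HV |
    (∃ (i j : V) (h : R.G.Adj i j), e = s(R.vu i j h, R.vu j i h.symm)) ∨
    (∃ (x y : V) (h : s(x, y) ∈ R.P) (h' : s(y, x) ∈ R.P), x ∉ U ∧ y ∈ U ∧
      (e = s(R.va x, R.vd x) ∨ e = s(R.vb x, R.vc x) ∨ e = s(R.va y, R.vb y) ∨
       e = s(R.vf x y h, R.vc y) ∨ e = s(R.vf y x h', R.vd y))) ∨
    (∃ t ∈ R.T, ∃ x y z : V, t = {x, y, z} ∧ x ∉ U ∧ y ∈ U ∧ z ∈ U ∧ y ≠ z ∧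
      R.pref (.d x) (.d y) < R.pref (.d x) (.d z) ∧
      (e = s(R.va x, R.vd x) ∨ e = s(R.vb x, R.vc x) ∨ e = s(R.va y, R.vb y) ∨
       e = s(R.va z, R.vb z) ∨ e = s(R.vc y, R.vc z) ∨ e = s(R.vd y, R.vd z)))}

end Reduction

/-- The vertex set of the Pair Selector gadget associated with a pair `{i,j}`. -/
def pairGadget {V : Type u} (i j : V) : Set (Gad V) :=
  {g : Gad V | ∃ x : V, (x = i ∨ x = j) ∧ (g = .a x ∨ g = .b x ∨ g = .c x ∨ g = .d x)} ∪
    {Gad.f i j, Gad.f j i}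

/-- The vertex set of the Triple Selector gadget associated with a triple `t`. -/
def tripleGadget {V : Type u} (t : Finset V) : Set (Gad V) :=
  {g : Gad V | ∃ x ∈ t, g = .a x ∨ g = .b x ∨ g = .c x ∨ g = .d x}

section AuxProof

variable {V : Type u} [LinearOrder V] (R : Reduction V) (U : Set V)

lemma mstar_u_partner {p q : V} (h : R.G.Adj p q) (w : R.HV)
    (hw : s(R.vu p q h, w) ∈ R.Mstar U) : w = R.vu q p h.symm := by
  simp only [Reduction.Mstar, Set.mem_setOf_eq] at hw
  rcases hw with ⟨i, j, hij, he⟩ | ⟨x, y, h1, h2, hx, hy, he⟩ |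
    ⟨t, ht, x, y, z, ht', hx, hy, hz, hyz, hp, he⟩
  · rw [Sym2.eq_iff] at he
    rcases he with ⟨h1, h2⟩ | ⟨h1, h2⟩ <;>
      simp_all [Reduction.vu, Subtype.ext_iff]
  · rcases he with he|he|he|he|he <;> rw [Sym2.eq_iff] at he <;>
      rcases he with ⟨h1', h2'⟩|⟨h1', h2'⟩ <;>
      simp_all [Reduction.vu, Reduction.va, Reduction.vb, Reduction.vc, Reduction.vd,
        Reduction.vf, Subtype.ext_iff]
  · rcases he with he|he|he|he|he|he <;> rw [Sym2.eq_iff] at he <;>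
      rcases he with ⟨h1', h2'⟩|⟨h1', h2'⟩ <;>
      simp_all [Reduction.vu, Reduction.va, Reduction.vb, Reduction.vc, Reduction.vd,
        Subtype.ext_iff]

lemma mstar_u_mem {p q : V} (h : R.G.Adj p q) :
    s(R.vu p q h, R.vu q p h.symm) ∈ R.Mstar U :=
  Or.inl ⟨p, q, h, rfl⟩

end AuxProof
section Aux2

variable {V : Type u} [LinearOrder V] (R : Reduction V) (U : Set V)

lemma rank_u {p q : V} (h : R.G.Adj p q) :
    rank R.H R.prefH (R.Mstar U) (R.vu p q h) = 1 := by
  have hex : ∃ w, s(R.vu p q h, w) ∈ R.Mstar U := ⟨_, mstar_u_mem R U h⟩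
  rw [rank, dif_pos hex]
  rw [mstar_u_partner R U h _ hex.choose_spec]
  exact R.pref_uu p q h

lemma mstar_b_partner {i : V} (hi : i ∈ U) (w : R.HV)
    (hw : s(R.vb i, w) ∈ R.Mstar U) : w = R.va i := by
  simp only [Reduction.Mstar, Set.mem_setOf_eq] at hw
  rcases hw with ⟨i', j', hij, he⟩ | ⟨x, y, h1, h2, hx, hy, he⟩ |
    ⟨t, ht, x, y, z, ht', hx, hy, hz, hyz, hp, he⟩
  · rw [Sym2.eq_iff] at he
    rcases he with ⟨h1, h2⟩ | ⟨h1, h2⟩ <;>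
      simp_all [Reduction.vu, Reduction.vb, Subtype.ext_iff]
  · rcases he with he|he|he|he|he <;> rw [Sym2.eq_iff] at he <;>
      rcases he with ⟨h1', h2'⟩|⟨h1', h2'⟩ <;>
      simp_all [Reduction.vu, Reduction.va, Reduction.vb, Reduction.vc, Reduction.vd,
        Reduction.vf, Subtype.ext_iff]
  · rcases he with he|he|he|he|he|he <;> rw [Sym2.eq_iff] at he <;>
      rcases he with ⟨h1', h2'⟩|⟨h1', h2'⟩ <;>
      simp_all [Reduction.vu, Reduction.va, Reduction.vb, Reduction.vc, Reduction.vd,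
        Subtype.ext_iff]

end Aux2
section Aux3

variable {V : Type u} [LinearOrder V]

lemma sorted3 {t : Finset V} (h : t.card = 3) :
    ∃ a b c : V, a < b ∧ b < c ∧ t = {a, b, c} := by
  rw [Finset.card_eq_three] at h
  obtain ⟨a, b, c, hab, hac, hbc, rfl⟩ := h
  rcases lt_trichotomy a b with h1 | h1 | h1
  · rcases lt_trichotomy b c with h2 | h2 | h2
    · exact ⟨a, b, c, h1, h2, rfl⟩
    · exact (hbc h2).elim
    · rcases lt_trichotomy a c with h3 | h3 | h3
      · exact ⟨a, c, b, h3, h2, by ext x; simp; tauto⟩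
      · exact (hac h3).elim
      · exact ⟨c, a, b, h3, h1, by ext x; simp; tauto⟩
  · exact (hab h1).elim
  · rcases lt_trichotomy a c with h2 | h2 | h2
    · exact ⟨b, a, c, h1, h2, by ext x; simp; tauto⟩
    · exact (hac h2).elim
    · rcases lt_trichotomy b c with h3 | h3 | h3
      · exact ⟨b, c, a, h3, h2, by ext x; simp; tauto⟩
      · exact (hbc h3).elim
      · exact ⟨c, b, a, h3, h1, by ext x; simp; tauto⟩

variable (R : Reduction V) (U : Set V)

lemma mstar_ab_mem (hU : IsPVCSolution R.G R.P R.T U) {i : V} (hi : i ∈ U) :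
    s(R.va i, R.vb i) ∈ R.Mstar U := by
  obtain ⟨hfin, hPsub, hPdisj, hTcard, hTtri, hTdisj, hcover, hnb⟩ := R.ispvc
  rcases hcover i with ⟨e, heP, hie⟩ | ⟨t, htT, hit⟩
  · obtain ⟨j, rfl⟩ : ∃ j, e = s(i, j) := ⟨Sym2.Mem.other hie, (Sym2.other_spec hie).symm⟩
    have hij : i ≠ j := by
      intro hh; subst hh
      exact (R.G.loopless.1 i) (R.G.mem_edgeSet.mp (hPsub heP))
    have hjU : j ∉ U := by
      intro hjU
      obtain ⟨a, ha⟩ := Set.ncard_eq_one.mp (hU.2.1 _ heP)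
      have h1 : i ∈ {x | x ∈ s(i, j) ∧ x ∈ U} := ⟨by simp, hi⟩
      have h2 : j ∈ {x | x ∈ s(i, j) ∧ x ∈ U} := ⟨by simp, hjU⟩
      rw [ha] at h1 h2
      simp only [Set.mem_singleton_iff] at h1 h2
      exact hij (h1.trans h2.symm)
    exact Or.inr (Or.inl ⟨j, i, by rwa [Sym2.eq_swap], heP, hjU, hi,
      Or.inr (Or.inr (Or.inl rfl))⟩)
  · obtain ⟨a, b, c, hab, hbc, rfl⟩ := sorted3 (hTcard _ htT)
    have hcard2 := hU.2.2 _ htT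
    have P := R.pref_tri _ htT a b c rfl hab hbc
    have hac : a < c := hab.trans hbc
    have hmem : i = a ∨ i = b ∨ i = c := by simpa using hit
    by_cases ha : a ∈ U <;> by_cases hb : b ∈ U <;> by_cases hc : c ∈ U
    · -- all in U: contradiction
      exfalso
      have hset : {x | x ∈ ({a, b, c} : Finset V) ∧ x ∈ U} = ({a, b, c} : Set V) := by
        ext x
        simp only [Finset.mem_insert, Finset.mem_singleton, Set.mem_setOf_eq,
          Set.mem_insert_iff, Set.mem_singleton_iff]
        constructor
        · rintro ⟨h, -⟩; exact h
        · rintro (rfl | rfl | rfl) <;> simp [ha, hb, hc]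
      rw [hset] at hcard2
      have h3 : ({a, b, c} : Set V).ncard = 3 := by
        rw [Set.ncard_insert_of_notMem (by simp [hab.ne, hac.ne]),
          Set.ncard_insert_of_notMem (by simp [hbc.ne]), Set.ncard_singleton]
      omega
    · -- a,b ∈ U, c ∉ U : x = c, y = a, z = b
      refine Or.inr (Or.inr ⟨{a, b, c}, htT, c, a, b, by ext x; simp; tauto, hc, ha, hb,
        hab.ne, ?_, ?_⟩)
      · rw [P.2.2.2.2.2.2.2.2.2.2.1, P.2.2.2.2.2.2.2.2.2.2.2]; omega
      · rcases hmem with rfl | rfl | rfl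
        · exact Or.inr (Or.inr (Or.inl rfl))
        · exact Or.inr (Or.inr (Or.inr (Or.inl rfl)))
        · exact absurd hi hc
    · -- a,c ∈ U, b ∉ U : x = b, y = c, z = a
      refine Or.inr (Or.inr ⟨{a, b, c}, htT, b, c, a, by ext x; simp; tauto, hb, hc, ha,
        hac.ne', ?_, ?_⟩)
      · rw [P.2.2.2.2.2.2.2.2.1, P.2.2.2.2.2.2.2.2.2.1]; omega
      · rcases hmem with rfl | rfl | rfl
        · exact Or.inr (Or.inr (Or.inr (Or.inl rfl)))
        · exact absurd hi hb
        · exact Or.inr (Or.inr (Or.inl rfl))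
    · -- only a ∈ U: contradiction
      exfalso
      have hset : {x | x ∈ ({a, b, c} : Finset V) ∧ x ∈ U} = ({a} : Set V) := by
        ext x
        simp only [Finset.mem_insert, Finset.mem_singleton, Set.mem_setOf_eq,
          Set.mem_singleton_iff]
        constructor
        · rintro ⟨rfl | rfl | rfl, h⟩
          · rfl
          · exact absurd h hb
          · exact absurd h hc
        · rintro rfl; exact ⟨Or.inl rfl, ha⟩
      rw [hset, Set.ncard_singleton] at hcard2
      omega
    · -- b,c ∈ U, a ∉ U : x = a, y = b, z = c
      refine Or.inr (Or.inr ⟨{a, b, c}, htT, a, b, c, rfl, ha, hb, hc, hbc.ne, ?_, ?_⟩)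
      · rw [P.2.2.2.2.2.2.1, P.2.2.2.2.2.2.2.1]; omega
      · rcases hmem with rfl | rfl | rfl
        · exact absurd hi ha
        · exact Or.inr (Or.inr (Or.inl rfl))
        · exact Or.inr (Or.inr (Or.inr (Or.inl rfl)))
    · -- only b ∈ U: contradiction
      exfalso
      have hset : {x | x ∈ ({a, b, c} : Finset V) ∧ x ∈ U} = ({b} : Set V) := by
        ext x
        simp only [Finset.mem_insert, Finset.mem_singleton, Set.mem_setOf_eq,
          Set.mem_singleton_iff]
        constructor
        · rintro ⟨rfl | rfl | rfl, h⟩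
          · exact absurd h ha
          · rfl
          · exact absurd h hc
        · rintro rfl; exact ⟨Or.inr (Or.inl rfl), hb⟩
      rw [hset, Set.ncard_singleton] at hcard2
      omega
    · -- only c ∈ U: contradiction
      exfalso
      have hset : {x | x ∈ ({a, b, c} : Finset V) ∧ x ∈ U} = ({c} : Set V) := by
        ext x
        simp only [Finset.mem_insert, Finset.mem_singleton, Set.mem_setOf_eq,
          Set.mem_singleton_iff]
        constructor
        · rintro ⟨rfl | rfl | rfl, h⟩
          · exact absurd h ha
          · exact absurd h hb
          · rfl
        · rintro rfl; exact ⟨Or.inr (Or.inr rfl), hc⟩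
      rw [hset, Set.ncard_singleton] at hcard2
      omega
    · -- none in U: contradiction
      exfalso
      have hset : {x | x ∈ ({a, b, c} : Finset V) ∧ x ∈ U} = (∅ : Set V) := by
        ext x
        simp only [Finset.mem_insert, Finset.mem_singleton, Set.mem_setOf_eq,
          Set.mem_empty_iff_false, iff_false]
        rintro ⟨rfl | rfl | rfl, h⟩
        · exact ha h
        · exact hb h
        · exact hc h
      rw [hset, Set.ncard_empty] at hcard2
      omega

lemma rank_b (hU : IsPVCSolution R.G R.P R.T U) {i : V} (hi : i ∈ U) :
    rank R.H R.prefH (R.Mstar U) (R.vb i) = 1 := by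
  have hex : ∃ w, s(R.vb i, w) ∈ R.Mstar U :=
    ⟨R.va i, by rw [Sym2.eq_swap]; exact mstar_ab_mem R U hU hi⟩
  rw [rank, dif_pos hex]
  rw [mstar_b_partner R U hi _ hex.choose_spec]
  exact R.pref_ba i

end Aux3
section Aux4

variable {V : Type u} [LinearOrder V] (R : Reduction V) (U : Set V)

lemma prefH_eq (g1 g2 : Gad V) (h1 : Gad.valid R.G R.P g1) (h2 : Gad.valid R.G R.P g2) :
    R.prefH ⟨g1, h1⟩ ⟨g2, h2⟩ = R.pref g1 g2 := rfl

lemma pref_b_u_ge {i j : V} (h : R.G.Adj i j) : 2 ≤ R.pref (.b i) (.u i j) :=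
  ((R.pref_bu i).1 ⟨j, h, rfl⟩).1

lemma not_plus_uu {p q : V} (h : R.G.Adj p q) :
    ¬ EdgePlus R.prefH (rank R.H R.prefH (R.Mstar U)) s(R.vu p q h, R.vu q p h.symm) := by
  rintro ⟨x, y, he, h1, h2⟩
  rw [Sym2.eq_iff] at he
  rcases he with ⟨rfl, rfl⟩ | ⟨rfl, rfl⟩
  · rw [rank_u R U h] at h1
    change R.pref (.u p q) (.u q p) < 1 at h1
    rw [R.pref_uu p q h] at h1
    omega
  · rw [rank_u R U h.symm] at h1
    change R.pref (.u q p) (.u p q) < 1 at h1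
    rw [R.pref_uu q p h.symm] at h1
    omega

lemma not_plus_bu {p q : V} (h : R.G.Adj p q) :
    ¬ EdgePlus R.prefH (rank R.H R.prefH (R.Mstar U)) s(R.vu p q h, R.vb p) := by
  rintro ⟨x, y, he, h1, h2⟩
  rw [Sym2.eq_iff] at he
  rcases he with ⟨rfl, rfl⟩ | ⟨rfl, rfl⟩
  · rw [rank_u R U h] at h1
    change R.pref (.u p q) (.b p) < 1 at h1
    rw [R.pref_ub p q h] at h1
    omega
  · rw [rank_u R U h] at h2
    change R.pref (.u p q) (.b p) < 1 at h2
    rw [R.pref_ub p q h] at h2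
    omega

lemma bu_notin_M {p q : V} (h : R.G.Adj p q) :
    s(R.vb p, R.vu p q h) ∉ R.Mstar U := by
  intro hm
  rw [Sym2.eq_swap] at hm
  have := mstar_u_partner R U h _ hm
  rw [Reduction.vb, Reduction.vu, Subtype.ext_iff] at this
  cases this

lemma minus_bu (hU : IsPVCSolution R.G R.P R.T U) {p q : V} (h : R.G.Adj p q) (hp : p ∈ U) :
    EdgeMinus R.prefH (rank R.H R.prefH (R.Mstar U)) s(R.vb p, R.vu p q h) := by
  refine ⟨R.vb p, R.vu p q h, rfl, ?_, ?_⟩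
  · rw [rank_b R U hU hp]
    change 1 < R.pref (.b p) (.u p q)
    have := pref_b_u_ge R h
    omega
  · rw [rank_u R U h]
    change 1 < R.pref (.u p q) (.b p)
    rw [R.pref_ub p q h]
    omega

lemma no_gm_bu (hU : IsPVCSolution R.G R.P R.T U) {p q : V} (h : R.G.Adj p q) (hp : p ∈ U) :
    ¬ (GMgraph R.H R.prefH (R.Mstar U)).Adj (R.vb p) (R.vu p q h) := by
  intro hadj
  obtain ⟨hH, hm | hm⟩ : R.H.Adj _ _ ∧ (_ ∨ _) := hadj
  · exact bu_notin_M R U h hm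
  · exact hm (minus_bu R U hU h hp)

lemma hadj_u {p q : V} (h : R.G.Adj p q) (w : R.HV) (hw : R.H.Adj (R.vu p q h) w) :
    w = R.vu q p h.symm ∨ w = R.vb p := by
  obtain ⟨g, hg⟩ := w
  obtain ⟨hne, hb | hb⟩ : _ ≠ _ ∧ (HBase _ _ _ _ _ ∨ HBase _ _ _ _ _) := hw
  · cases hb
    exact Or.inl (Subtype.ext rfl)
  · cases hb
    · exact Or.inl (Subtype.ext rfl)
    · exact Or.inr (Subtype.ext rfl)

end Aux4
section Aux5

open SimpleGraph

lemma isAltPath_reverse {W : Type u} (M : Set (Sym2 W)) {G' : SimpleGraph W} {x y : W}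
    (p : G'.Walk x y) (hp : IsAltPath M p) : IsAltPath M p.reverse := by
  obtain ⟨h1, h2, h3, h4⟩ := hp
  refine ⟨h1.reverse, ?_, ?_, ?_⟩
  · rw [Walk.edges_reverse, List.Chain', List.isChain_reverse]
    exact h2.imp (fun hab => by simp only [flip, altRel] at *; tauto)
  · intro e he
    rw [Walk.edges_reverse, List.head?_reverse] at he
    exact h4 e he
  · intro e he
    rw [Walk.edges_reverse, List.getLast?_reverse] at he
    exact h3 e he

variable {V : Type u} [LinearOrder V] (R : Reduction V) (U : Set V)

lemma core (hU : IsPVCSolution R.G R.P R.T U) {x y : R.HV}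
    (S : (GMgraph R.H R.prefH (R.Mstar U)).Walk x y)
    (hS : IsAltPath (R.Mstar U) S)
    (hS2 : TwoPlusEdges R.prefH (rank R.H R.prefH (R.Mstar U)) S.edges)
    (hmin : ∀ (x' y' : R.HV) (S' : (GMgraph R.H R.prefH (R.Mstar U)).Walk x' y'),
      IsAltPath (R.Mstar U) S' →
      TwoPlusEdges R.prefH (rank R.H R.prefH (R.Mstar U)) S'.edges →
      S.length ≤ S'.length)
    {p q : V} (hpq : R.G.Adj p q) (hx : x = R.vu p q hpq) : False := by
  cases S with
  | nil =>
    obtain ⟨e, he, _⟩ := hS2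
    simp at he
  | @cons _ w1 _ h1 S₁ =>
    have hmx : Matched (R.Mstar U) x := ⟨_, hx ▸ mstar_u_mem R U hpq⟩
    have he1 : s(x, w1) ∈ R.Mstar U := by
      by_contra hne
      exact hS.2.2.1 s(x, w1) (by simp) hne hmx
    have hw1 : w1 = R.vu q p hpq.symm := by
      subst hx
      exact mstar_u_partner R U hpq _ he1
    cases S₁ with
    | nil =>
      obtain ⟨e, he, e', he', hne, _, _⟩ := hS2
      simp at he he'
      exact hne (he.trans he'.symm)
    | @cons _ w2 _ h2 S₂ =>
      have hw2 : w2 = R.vu p q hpq ∨ w2 = R.vb q := by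
        subst hw1
        exact hadj_u R hpq.symm _ (show R.H.Adj _ _ ∧ _ from h2).1
      have hxne : x ≠ w2 := by
        intro hh
        have hnd := hS.1.support_nodup
        rw [Walk.support_cons] at hnd
        exact (List.nodup_cons.mp hnd).1 (by rw [hh, Walk.support_cons]; simp)
      have hw2b : w2 = R.vb q := by
        rcases hw2 with hw2 | hw2
        · exact absurd (hx.trans hw2.symm) hxne
        · exact hw2
      -- alternation facts
      have hch := hS.2.1
      rw [Walk.edges_cons, Walk.edges_cons, List.Chain', List.isChain_cons_cons] at hch
      have he2 : s(w1, w2) ∉ R.Mstar U := hch.1.mp he1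
      have hch2 := List.isChain_cons.mp hch.2
      -- S₂ is an alternating path
      have haltS₂ : IsAltPath (R.Mstar U) S₂ := by
        refine ⟨hS.1.of_cons.of_cons, hch2.2, ?_, ?_⟩
        · intro e he henM
          exact absurd (hch2.1 e he) (by unfold altRel; tauto)
        · intro e he henM
          refine hS.2.2.2 e ?_ henM
          rw [Walk.edges_cons, Walk.edges_cons]
          exact Option.mem_def.mp
            (List.mem_getLast?_cons (List.mem_getLast?_cons (Option.mem_def.mpr he)))
      -- the two plus edges survive
      have htwo : TwoPlusEdges R.prefH (rank R.H R.prefH (R.Mstar U)) S₂.edges := by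
        obtain ⟨e, he, e', he', hne, hpl, hpl'⟩ := hS2
        have hnp1 : ¬ EdgePlus R.prefH (rank R.H R.prefH (R.Mstar U)) s(x, w1) := by
          rw [hx, hw1]
          exact not_plus_uu R U hpq
        have hnp2 : ¬ EdgePlus R.prefH (rank R.H R.prefH (R.Mstar U)) s(w1, w2) := by
          rw [hw1, hw2b]
          exact not_plus_bu R U hpq.symm
        rw [Walk.edges_cons, Walk.edges_cons] at he he'
        simp only [List.mem_cons] at he he'
        rcases he with rfl | rfl | he
        · exact absurd hpl hnp1
        · exact absurd hpl hnp2
        · rcases he' with rfl | rfl | he'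
          · exact absurd hpl' hnp1
          · exact absurd hpl' hnp2
          · exact ⟨e, he, e', he', hne, hpl, hpl'⟩
      have := hmin _ _ S₂ haltS₂ htwo
      simp only [Walk.length_cons] at this
      omega

end Aux5
/-- A shortest alternating path in `H_{M*}` containing at least two edges labeled `+2`
does not pass through any vertex `u^e_i`. -/
theorem shortest_bad_alt_path_avoids_u {V : Type u} [LinearOrder V] (R : Reduction V)
    (U : Set V) (hU : IsPVCSolution R.G R.P R.T U) (x y : R.HV)
    (S : (GMgraph R.H R.prefH (R.Mstar U)).Walk x y)
    (hS : IsAltPath (R.Mstar U) S)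
    (hS2 : TwoPlusEdges R.prefH (rank R.H R.prefH (R.Mstar U)) S.edges)
    (hmin : ∀ (x' y' : R.HV) (S' : (GMgraph R.H R.prefH (R.Mstar U)).Walk x' y'),
      IsAltPath (R.Mstar U) S' →
      TwoPlusEdges R.prefH (rank R.H R.prefH (R.Mstar U)) S'.edges →
      S.length ≤ S'.length) :
    ∀ v ∈ S.support, ∀ i j : V, v.1 ≠ Gad.u i j := by
  intro v hv i j
  by_contra hveq
  have hadj : R.G.Adj i j := by
    have h2 := v.2
    rw [hveq] at h2
    exact h2
  have hv' : v = R.vu i j hadj := Subtype.ext hveq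
  have hSrev := isAltPath_reverse _ _ hS
  have hS2rev : TwoPlusEdges R.prefH (rank R.H R.prefH (R.Mstar U)) S.reverse.edges := by
    obtain ⟨e, he, e', he', hne, hp1, hp2⟩ := hS2
    exact ⟨e, by rw [Walk.edges_reverse]; exact List.mem_reverse.mpr he,
      e', by rw [Walk.edges_reverse]; exact List.mem_reverse.mpr he', hne, hp1, hp2⟩
  have hminrev : ∀ (x' y' : R.HV) (S' : (GMgraph R.H R.prefH (R.Mstar U)).Walk x' y'),
      IsAltPath (R.Mstar U) S' →
      TwoPlusEdges R.prefH (rank R.H R.prefH (R.Mstar U)) S'.edges →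
      S.reverse.length ≤ S'.length := by
    intro x' y' S' h h2
    rw [Walk.length_reverse]
    exact hmin x' y' S' h h2
  by_cases hvx : v = x
  · exact core R U hU S hS hS2 hmin hadj (hvx ▸ hv' : x = R.vu i j hadj)
  by_cases hvy : v = y
  · exact core R U hU S.reverse hSrev hS2rev hminrev hadj (hvy ▸ hv' : y = R.vu i j hadj)
  -- interior case
  have hspec := S.take_spec hv
  have hq'nil : ¬ (S.dropUntil v hv).Nil := Walk.not_nil_of_ne (fun hh => hvy hh)
  have hp'nil : ¬ (S.takeUntil v hv).reverse.Nil :=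
    Walk.not_nil_of_ne (fun hh => hvx hh)
  obtain ⟨w1, h1, t1, hq'⟩ := Walk.not_nil_iff.mp hq'nil
  obtain ⟨w2, h2, t2, hp'⟩ := Walk.not_nil_iff.mp hp'nil
  have hmem1 : s(v, w1) ∈ (S.dropUntil v hv).edges := by rw [hq']; simp
  have hmem2 : s(v, w2) ∈ (S.takeUntil v hv).edges := by
    have h' : s(v, w2) ∈ (S.takeUntil v hv).reverse.edges := by rw [hp']; simp
    rwa [Walk.edges_reverse, List.mem_reverse] at h'
  have hedges : S.edges = (S.takeUntil v hv).edges ++ (S.dropUntil v hv).edges := by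
    conv_lhs => rw [← hspec]
    rw [Walk.edges_append]
  have hnd : S.edges.Nodup := hS.1.edges_nodup
  have hw12 : w1 ≠ w2 := by
    intro hh
    rw [hedges] at hnd
    exact (List.disjoint_of_nodup_append hnd) hmem2 (hh ▸ hmem1)
  have hn1 : w1 = R.vu j i hadj.symm ∨ w1 = R.vb i := by
    refine hadj_u R hadj _ ?_
    exact (show (GMgraph R.H R.prefH (R.Mstar U)).Adj (R.vu i j hadj) w1 by
      rw [← hv']; exact h1).1
  have hn2 : w2 = R.vu j i hadj.symm ∨ w2 = R.vb i := by
    refine hadj_u R hadj _ ?_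
    exact (show (GMgraph R.H R.prefH (R.Mstar U)).Adj (R.vu i j hadj) w2 by
      rw [← hv']; exact h2).1
  rcases hn1 with hn1 | hn1
  · -- Case A : w1 = u j i, hence w2 = b i
    have hw2b : w2 = R.vb i := by
      rcases hn2 with hn2 | hn2
      · exact absurd (hn1.trans hn2.symm) hw12
      · exact hn2
    have hiU : i ∉ U := fun hiU => no_gm_bu R U hU hadj hiU
      (show (GMgraph R.H R.prefH (R.Mstar U)).Adj (R.vb i) (R.vu i j hadj) by
        rw [← hv', ← hw2b]; exact h2.symm)
    by_cases ht1nil : t1.Nil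
    · -- y = w1 = u j i : endpoint case via reverse
      have hy : y = R.vu j i hadj.symm := (ht1nil.eq.symm).trans hn1
      exact core R U hU S.reverse hSrev hS2rev hminrev hadj.symm hy
    · obtain ⟨w3, h3, t3, ht1⟩ := Walk.not_nil_iff.mp ht1nil
      have hn3 : w3 = R.vu i j hadj ∨ w3 = R.vb j := by
        refine hadj_u R hadj.symm _ ?_
        exact (show R.H.Adj _ _ ∧ _ from show (GMgraph R.H R.prefH (R.Mstar U)).Adj (R.vu j i hadj.symm) w3 by
          rw [← hn1]; exact h3).1
      have hq'path : (S.dropUntil v hv).IsPath := hS.1.dropUntil hv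
      have hvw3 : v ≠ w3 := by
        intro hh
        rw [hq', ht1] at hq'path
        have := hq'path.support_nodup
        rw [Walk.support_cons] at this
        exact (List.nodup_cons.mp this).1 (by rw [hh, Walk.support_cons]; simp)
      have hw3b : w3 = R.vb j := by
        rcases hn3 with hn3 | hn3
        · exact absurd (hv'.trans hn3.symm) hvw3
        · exact hn3
      have hjU : j ∉ U := fun hjU => no_gm_bu R U hU hadj.symm hjU
        (show (GMgraph R.H R.prefH (R.Mstar U)).Adj (R.vb j) (R.vu j i hadj.symm) by
          rw [← hn1, ← hw3b]; exact h3.symm)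
      rcases hU.1 hadj with h | h
      · exact hiU h
      · exact hjU h
  · -- Case B : w1 = b i, w2 = u j i
    have hw2u : w2 = R.vu j i hadj.symm := by
      rcases hn2 with hn2 | hn2
      · exact hn2
      · exact absurd (hn1.trans hn2.symm) hw12
    have hiU : i ∉ U := fun hiU => no_gm_bu R U hU hadj hiU
      (show (GMgraph R.H R.prefH (R.Mstar U)).Adj (R.vb i) (R.vu i j hadj) by
        rw [← hv', ← hn1]; exact h1.symm)
    by_cases ht2nil : t2.Nil
    · -- x = w2 = u j i : endpoint case
      have hx : x = R.vu j i hadj.symm := (ht2nil.eq.symm).trans hw2u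
      exact core R U hU S hS hS2 hmin hadj.symm hx
    · obtain ⟨w3, h3, t3, ht2⟩ := Walk.not_nil_iff.mp ht2nil
      have hn3 : w3 = R.vu i j hadj ∨ w3 = R.vb j := by
        refine hadj_u R hadj.symm _ ?_
        exact (show R.H.Adj _ _ ∧ _ from show (GMgraph R.H R.prefH (R.Mstar U)).Adj (R.vu j i hadj.symm) w3 by
          rw [← hw2u]; exact h3).1
      have hp'path : (S.takeUntil v hv).reverse.IsPath := (hS.1.takeUntil hv).reverse
      have hvw3 : v ≠ w3 := by
        intro hh
        rw [hp', ht2] at hp'path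
        have := hp'path.support_nodup
        rw [Walk.support_cons] at this
        exact (List.nodup_cons.mp this).1 (by rw [hh, Walk.support_cons]; simp)
      have hw3b : w3 = R.vb j := by
        rcases hn3 with hn3 | hn3
        · exact absurd (hv'.trans hn3.symm) hvw3
        · exact hn3
      have hjU : j ∉ U := fun hjU => no_gm_bu R U hU hadj.symm hjU
        (show (GMgraph R.H R.prefH (R.Mstar U)).Adj (R.vb j) (R.vu j i hadj.symm) by
          rw [← hw2u, ← hw3b]; exact h3.symm)
      rcases hU.1 hadj with h | h
      · exact hiU h
      · exact hjU h
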